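/- Let Q, R^L, R^R be positive semi-definite with R^L > 0, R^R > 0, and let p ∈ [0,1]. For each horizon N, define (with terminal values Z_{N+1}(N) = X_{N+1}(N) = 0) the backward recursion: Υ_k = [B^L B^R]′Z_{k+1}[B^L B^R] + diag(R^L,R^R), K_k = Υ_k^{−1}[B^L B^R]′Z_{k+1}A, Z_k = A′Z_{k+1}A + Q − K_k′Υ_kK_k, Ψ_{k+1} = (1−p)Z_{k+1} + pX_{k+1}, Λ_k = (B^L)′Ψ_{k+1}B^L + R^L, M_k = (B^L)′Ψ_{k+1}A, X_k = A′Ψ_{k+1}A + Q − M_k′Λ_k^{−1}M_k. Then for every N the recursion is well defined (Υ_k > 0 and Λ_k > 0 at every step), all Z_k(N) and X_k(N) are positive semi-definite, and the matrices Ψ_0(N) := (1−p)Z_0(N) + pX_0(N) are monotonically nondecreasing in N in the Loewner order: Ψ_0(N) ⪯ Ψ_0(N+1) for all N ≥ 0. -/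

import Mathlib

open Matrix

noncomputable section

namespace NCS12

/-- System data for the networked control system: plant matrices `A, B^L, B^R`,
weight matrices `Q, R^L, R^R` and packet-dropout probability `p`. -/
structure Sys (n mL mR : ℕ) where
  A : Matrix (Fin n) (Fin n) ℝ
  BL : Matrix (Fin n) (Fin mL) ℝ
  BR : Matrix (Fin n) (Fin mR) ℝ
  Q : Matrix (Fin n) (Fin n) ℝ
  RL : Matrix (Fin mL) (Fin mL) ℝ
  RR : Matrix (Fin mR) (Fin mR) ℝ
  p : ℝ

namespace Sys

variable {n mL mR : ℕ} (S : Sys n mL mR)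

/-- The stacked input matrix `[B^L  B^R]`. -/
def Bc : Matrix (Fin n) (Fin mL ⊕ Fin mR) ℝ := fromCols S.BL S.BR

/-- The stacked weight `diag(R^L, R^R)`. -/
def Rc : Matrix (Fin mL ⊕ Fin mR) (Fin mL ⊕ Fin mR) ℝ := fromBlocks S.RL 0 0 S.RR

/-- `Υ = [B^L B^R]′ Z [B^L B^R] + diag(R^L, R^R)`. -/
def Ups (Z : Matrix (Fin n) (Fin n) ℝ) : Matrix (Fin mL ⊕ Fin mR) (Fin mL ⊕ Fin mR) ℝ :=
  S.Bcᵀ * Z * S.Bc + S.Rc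

/-- `K = Υ⁻¹ [B^L B^R]′ Z A`. -/
def Kg (Z : Matrix (Fin n) (Fin n) ℝ) : Matrix (Fin mL ⊕ Fin mR) (Fin n) ℝ :=
  (S.Ups Z)⁻¹ * (S.Bcᵀ * Z * S.A)

/-- `Ψ = (1 − p) Z + p X`. -/
def Psi (Z X : Matrix (Fin n) (Fin n) ℝ) : Matrix (Fin n) (Fin n) ℝ :=
  (1 - S.p) • Z + S.p • X

/-- `Λ = (B^L)′ Ψ B^L + R^L`. -/
def Lam (Ψ : Matrix (Fin n) (Fin n) ℝ) : Matrix (Fin mL) (Fin mL) ℝ :=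
  S.BLᵀ * Ψ * S.BL + S.RL

/-- `M = (B^L)′ Ψ A`. -/
def Mg (Ψ : Matrix (Fin n) (Fin n) ℝ) : Matrix (Fin mL) (Fin n) ℝ :=
  S.BLᵀ * Ψ * S.A

/-- One backward step of the `Z`-Riccati recursion: `A′ZA + Q − K′ΥK`. -/
def Zstep (Z : Matrix (Fin n) (Fin n) ℝ) : Matrix (Fin n) (Fin n) ℝ :=
  S.Aᵀ * Z * S.A + S.Q - (S.Kg Z)ᵀ * S.Ups Z * S.Kg Z

/-- One backward step of the `X`-Riccati recursion: `A′ΨA + Q − M′Λ⁻¹M`. -/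
def Xstep (Ψ : Matrix (Fin n) (Fin n) ℝ) : Matrix (Fin n) (Fin n) ℝ :=
  S.Aᵀ * Ψ * S.A + S.Q - (S.Mg Ψ)ᵀ * (S.Lam Ψ)⁻¹ * S.Mg Ψ

/-- The coupled Riccati recursion in "steps-to-go" form with terminal value `P`:
`ZX P j` is the pair `(Z_k(N), X_k(N))` when `j = N + 1 − k`.  In particular the
time-invariance `Z_k(N) = Z_{k−s}(N−s)` lets one write `Z_0(N) = (ZX P (N+1)).1`. -/
def ZX (P : Matrix (Fin n) (Fin n) ℝ) : ℕ → Matrix (Fin n) (Fin n) ℝ × Matrix (Fin n) (Fin n) ℝ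
  | 0 => (P, P)
  | j + 1 =>
      (S.Zstep (ZX P j).1, S.Xstep (S.Psi (ZX P j).1 (ZX P j).2))

end Sys

/-! ### Auxiliary lemmas -/

section Aux

set_option linter.unusedSectionVars false

variable {ι κ : Type*} [Fintype ι] [Fintype κ] [DecidableEq ι] [DecidableEq κ]

lemma psd_smul {c : ℝ} {M : Matrix ι ι ℝ} (hc : 0 ≤ c) (hM : M.PosSemidef) :
    (c • M).PosSemidef := by
  refine posSemidef_iff_dotProduct_mulVec.mpr ⟨?_, fun x => ?_⟩
  · unfold Matrix.IsHermitian
    rw [conjTranspose_smul, hM.1]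
    simp
  · rw [smul_mulVec, dotProduct_smul]
    exact mul_nonneg hc (hM.dotProduct_mulVec_nonneg x)

/-- The generic Riccati step. -/
def ric (A : Matrix ι ι ℝ) (B : Matrix ι κ ℝ) (Q : Matrix ι ι ℝ) (R : Matrix κ κ ℝ)
    (Z : Matrix ι ι ℝ) : Matrix ι ι ℝ :=
  Aᵀ * Z * A + Q - (Bᵀ * Z * A)ᵀ * (Bᵀ * Z * B + R)⁻¹ * (Bᵀ * Z * A)

lemma U_posdef {B : Matrix ι κ ℝ} {R : Matrix κ κ ℝ} {Z : Matrix ι ι ℝ}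
    (hZ : Z.PosSemidef) (hR : R.PosDef) : (Bᵀ * Z * B + R).PosDef := by
  have h := hZ.conjTranspose_mul_mul_same B
  rw [conjTranspose_eq_transpose_of_trivial] at h
  exact Matrix.PosDef.posSemidef_add h hR

lemma U_symm {B : Matrix ι κ ℝ} {R : Matrix κ κ ℝ} {Z : Matrix ι ι ℝ}
    (hZ : Zᵀ = Z) (hR : Rᵀ = R) : (Bᵀ * Z * B + R)ᵀ = Bᵀ * Z * B + R := by
  rw [transpose_add, hR, transpose_mul, transpose_mul, transpose_transpose, hZ,
    ← Matrix.mul_assoc]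

lemma sq_expand (U V : Matrix κ κ ℝ) (N F : Matrix κ ι ℝ)
    (hV : Vᵀ = V) (h1 : U * V = 1) (h2 : V * U = 1) :
    (F - V * N)ᵀ * U * (F - V * N)
      = Fᵀ * U * F - Fᵀ * N - Nᵀ * F + Nᵀ * V * N := by
  have e1 : (F - V * N)ᵀ = Fᵀ - Nᵀ * V := by rw [transpose_sub, transpose_mul, hV]
  rw [e1, Matrix.sub_mul, Matrix.sub_mul, Matrix.mul_sub, Matrix.mul_sub,
    Matrix.mul_assoc Fᵀ U (V * N), ← Matrix.mul_assoc U V N, h1, Matrix.one_mul,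
    Matrix.mul_assoc Nᵀ V U, h2, Matrix.mul_one, ← Matrix.mul_assoc Nᵀ V N]
  abel

/-- Completion of the square for the Riccati step. -/
lemma ric_key (A Q Z : Matrix ι ι ℝ) (B : Matrix ι κ ℝ) (R : Matrix κ κ ℝ)
    (hZ : Zᵀ = Z) (hR : Rᵀ = R) (hU : IsUnit (Bᵀ * Z * B + R)) (F : Matrix κ ι ℝ) :
    ric A B Q R Z +
      (F - (Bᵀ * Z * B + R)⁻¹ * (Bᵀ * Z * A))ᵀ * (Bᵀ * Z * B + R) *
        (F - (Bᵀ * Z * B + R)⁻¹ * (Bᵀ * Z * A))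
      = (A - B * F)ᵀ * Z * (A - B * F) + Q + Fᵀ * R * F := by
  have hdet : IsUnit (Bᵀ * Z * B + R).det := (Matrix.isUnit_iff_isUnit_det _).mp hU
  have hUs : (Bᵀ * Z * B + R)ᵀ = Bᵀ * Z * B + R := U_symm hZ hR
  have hUis : ((Bᵀ * Z * B + R)⁻¹)ᵀ = (Bᵀ * Z * B + R)⁻¹ := by
    rw [Matrix.transpose_nonsing_inv, hUs]
  have h1 : (Bᵀ * Z * B + R) * (Bᵀ * Z * B + R)⁻¹ = 1 := Matrix.mul_nonsing_inv _ hdet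
  have h2 : (Bᵀ * Z * B + R)⁻¹ * (Bᵀ * Z * B + R) = 1 := Matrix.nonsing_inv_mul _ hdet
  have hsq := sq_expand (Bᵀ * Z * B + R) (Bᵀ * Z * B + R)⁻¹ (Bᵀ * Z * A) F hUis h1 h2
  rw [ric, hsq]
  simp only [transpose_sub, transpose_mul, transpose_transpose, hZ,
    Matrix.sub_mul, Matrix.mul_sub, Matrix.add_mul, Matrix.mul_add, Matrix.mul_assoc]
  abel

lemma transpose_of_psd {Z : Matrix ι ι ℝ} (hZ : Z.PosSemidef) : Zᵀ = Z := by
  have := hZ.1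
  rwa [Matrix.IsHermitian, conjTranspose_eq_transpose_of_trivial] at this

lemma transpose_of_pd {Z : Matrix ι ι ℝ} (hZ : Z.PosDef) : Zᵀ = Z :=
  transpose_of_psd hZ.posSemidef

lemma psd_conj {Z : Matrix ι ι ℝ} {m' : Type*} [Fintype m'] (hZ : Z.PosSemidef)
    (C : Matrix ι m' ℝ) : (Cᵀ * Z * C).PosSemidef := by
  have h := hZ.conjTranspose_mul_mul_same C
  rwa [conjTranspose_eq_transpose_of_trivial] at h

lemma ric_psd {A Q Z : Matrix ι ι ℝ} {B : Matrix ι κ ℝ} {R : Matrix κ κ ℝ}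
    (hQ : Q.PosSemidef) (hR : R.PosDef) (hZ : Z.PosSemidef) :
    (ric A B Q R Z).PosSemidef := by
  have hU : (Bᵀ * Z * B + R).PosDef := U_posdef hZ hR
  have key := ric_key A Q Z B R (transpose_of_psd hZ) (transpose_of_pd hR) hU.isUnit
    ((Bᵀ * Z * B + R)⁻¹ * (Bᵀ * Z * A))
  rw [sub_self] at key
  simp only [transpose_zero, Matrix.zero_mul, Matrix.mul_zero, add_zero] at key
  rw [key]
  exact ((psd_conj hZ _).add hQ).add (psd_conj hR.posSemidef _)

lemma ric_mono {A Q Z₁ Z₂ : Matrix ι ι ℝ} {B : Matrix ι κ ℝ} {R : Matrix κ κ ℝ}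
    (hR : R.PosDef) (hZ₁ : Z₁.PosSemidef) (hd : (Z₂ - Z₁).PosSemidef) :
    (ric A B Q R Z₂ - ric A B Q R Z₁).PosSemidef := by
  have hZ₂ : Z₂.PosSemidef := by
    have := hd.add hZ₁
    rwa [sub_add_cancel] at this
  have hU₁ : (Bᵀ * Z₁ * B + R).PosDef := U_posdef hZ₁ hR
  have hU₂ : (Bᵀ * Z₂ * B + R).PosDef := U_posdef hZ₂ hR
  set K₂ : Matrix κ ι ℝ := (Bᵀ * Z₂ * B + R)⁻¹ * (Bᵀ * Z₂ * A) with hK₂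
  have e2 := ric_key A Q Z₂ B R (transpose_of_psd hZ₂) (transpose_of_pd hR) hU₂.isUnit K₂
  have e1 := ric_key A Q Z₁ B R (transpose_of_psd hZ₁) (transpose_of_pd hR) hU₁.isUnit K₂
  rw [hK₂, sub_self] at e2
  simp only [transpose_zero, Matrix.zero_mul, Matrix.mul_zero, add_zero, ← hK₂] at e2
  have key : ric A B Q R Z₂ - ric A B Q R Z₁
      = (A - B * K₂)ᵀ * (Z₂ - Z₁) * (A - B * K₂)
        + (K₂ - (Bᵀ * Z₁ * B + R)⁻¹ * (Bᵀ * Z₁ * A))ᵀ * (Bᵀ * Z₁ * B + R) *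
            (K₂ - (Bᵀ * Z₁ * B + R)⁻¹ * (Bᵀ * Z₁ * A)) := by
    have exp : ∀ X : Matrix ι ι ℝ, Xᵀ * (Z₂ - Z₁) * X = Xᵀ * Z₂ * X - Xᵀ * Z₁ * X := by
      intro X
      rw [Matrix.mul_sub, Matrix.sub_mul]
    rw [eq_sub_of_add_eq e1, e2, exp]
    abel
  rw [key]
  exact (psd_conj hd _).add (psd_conj hU₁.posSemidef _)

end Aux

section SysAux

variable {n mL mR : ℕ} (S : Sys n mL mR)

lemma Rc_posdef (hRL : S.RL.PosDef) (hRR : S.RR.PosDef) : S.Rc.PosDef := by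
  rw [posDef_iff_dotProduct_mulVec]
  constructor
  · rw [Matrix.IsHermitian, conjTranspose_eq_transpose_of_trivial, Sys.Rc,
      fromBlocks_transpose]
    simp [transpose_of_pd hRL, transpose_of_pd hRR]
  · intro x hx
    have hsplit : x = Sum.elim (x ∘ Sum.inl) (x ∘ Sum.inr) := (Sum.elim_comp_inl_inr x).symm
    have hne : x ∘ Sum.inl ≠ 0 ∨ x ∘ Sum.inr ≠ 0 := by
      by_contra h
      push_neg at h
      apply hx
      rw [hsplit, h.1, h.2]
      ext (i | i) <;> simp
    have hval : star x ⬝ᵥ (S.Rc *ᵥ x)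
        = star (x ∘ Sum.inl) ⬝ᵥ (S.RL *ᵥ (x ∘ Sum.inl))
          + star (x ∘ Sum.inr) ⬝ᵥ (S.RR *ᵥ (x ∘ Sum.inr)) := by
      rw [Sys.Rc, fromBlocks_mulVec]
      simp only [Matrix.zero_mulVec, add_zero, zero_add, star_trivial]
      conv_lhs => rw [hsplit]
      rw [sumElim_dotProduct_sumElim]
      simp only [Sum.elim_comp_inl, Sum.elim_comp_inr]
    rw [hval]
    rcases hne with h | h
    · exact add_pos_of_pos_of_nonneg (hRL.dotProduct_mulVec_pos h) (hRR.posSemidef.dotProduct_mulVec_nonneg _)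
    · exact add_pos_of_nonneg_of_pos (hRL.posSemidef.dotProduct_mulVec_nonneg _) (hRR.dotProduct_mulVec_pos h)

lemma Zstep_eq_ric {Z : Matrix (Fin n) (Fin n) ℝ} (hZ : Z.PosSemidef) (hRc : S.Rc.PosDef) :
    S.Zstep Z = ric S.A S.Bc S.Q S.Rc Z := by
  have hU : (S.Bcᵀ * Z * S.Bc + S.Rc).PosDef := U_posdef hZ hRc
  have hdet := (Matrix.isUnit_iff_isUnit_det _).mp hU.isUnit
  have hUs := U_symm (B := S.Bc) (transpose_of_psd hZ) (transpose_of_pd hRc)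
  have hUis : ((S.Bcᵀ * Z * S.Bc + S.Rc)⁻¹)ᵀ = (S.Bcᵀ * Z * S.Bc + S.Rc)⁻¹ := by
    rw [Matrix.transpose_nonsing_inv, hUs]
  rw [Sys.Zstep, Sys.Kg, Sys.Ups, ric]
  congr 1
  rw [transpose_mul, hUis, Matrix.mul_assoc,
    Matrix.mul_nonsing_inv_cancel_left _ _ hdet]

end SysAux

/-- For positive semidefinite `Q` and positive definite `R^L, R^R`
and `p ∈ [0,1]`, the finite-horizon Riccati recursion with zero terminal value is
well defined (`Υ > 0` and `Λ > 0` at every step), produces positive semidefinite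
matrices `Z_k(N), X_k(N)`, and the matrices `Ψ_0(N) = (1−p)Z_0(N) + pX_0(N)` are
monotonically nondecreasing in the horizon `N` in the Loewner order. -/
theorem riccati_monotone {n mL mR : ℕ} (S : Sys n mL mR)
    (hQ : S.Q.PosSemidef) (hRL : S.RL.PosDef) (hRR : S.RR.PosDef)
    (hp0 : 0 ≤ S.p) (hp1 : S.p ≤ 1) :
    (∀ j : ℕ, (S.Ups (S.ZX 0 j).1).PosDef ∧
      (S.Lam (S.Psi (S.ZX 0 j).1 (S.ZX 0 j).2)).PosDef) ∧
    (∀ j : ℕ, (S.ZX 0 j).1.PosSemidef ∧ (S.ZX 0 j).2.PosSemidef) ∧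
    (∀ N : ℕ,
      (S.Psi (S.ZX 0 (N + 2)).1 (S.ZX 0 (N + 2)).2
        - S.Psi (S.ZX 0 (N + 1)).1 (S.ZX 0 (N + 1)).2).PosSemidef) := by
  have hRc : S.Rc.PosDef := Rc_posdef S hRL hRR
  have hp1' : 0 ≤ 1 - S.p := by linarith
  have hXstep : ∀ Ψ : Matrix (Fin n) (Fin n) ℝ, S.Xstep Ψ = ric S.A S.BL S.Q S.RL Ψ :=
    fun _ => rfl
  have hpsd : ∀ j : ℕ, (S.ZX 0 j).1.PosSemidef ∧ (S.ZX 0 j).2.PosSemidef := by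
    intro j
    induction j with
    | zero => exact ⟨Matrix.PosSemidef.zero, Matrix.PosSemidef.zero⟩
    | succ j ih =>
      have hΨ : (S.Psi (S.ZX 0 j).1 (S.ZX 0 j).2).PosSemidef :=
        (psd_smul hp1' ih.1).add (psd_smul hp0 ih.2)
      constructor
      · show (S.Zstep (S.ZX 0 j).1).PosSemidef
        rw [Zstep_eq_ric S ih.1 hRc]
        exact ric_psd hQ hRc ih.1
      · show (S.Xstep (S.Psi (S.ZX 0 j).1 (S.ZX 0 j).2)).PosSemidef
        rw [hXstep]
        exact ric_psd hQ hRL hΨ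
  have hΨpsd : ∀ j : ℕ, (S.Psi (S.ZX 0 j).1 (S.ZX 0 j).2).PosSemidef := fun j =>
    (psd_smul hp1' (hpsd j).1).add (psd_smul hp0 (hpsd j).2)
  have hPsiSub : ∀ Z' X' Z X : Matrix (Fin n) (Fin n) ℝ,
      S.Psi Z' X' - S.Psi Z X = (1 - S.p) • (Z' - Z) + S.p • (X' - X) := by
    intro Z' X' Z X
    simp only [Sys.Psi, smul_sub]
    abel
  have hmono : ∀ j : ℕ, ((S.ZX 0 (j + 1)).1 - (S.ZX 0 j).1).PosSemidef ∧
      ((S.ZX 0 (j + 1)).2 - (S.ZX 0 j).2).PosSemidef := by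
    intro j
    induction j with
    | zero =>
      constructor
      · show ((S.ZX 0 1).1 - (0 : Matrix (Fin n) (Fin n) ℝ)).PosSemidef
        rw [sub_zero]
        exact (hpsd 1).1
      · show ((S.ZX 0 1).2 - (0 : Matrix (Fin n) (Fin n) ℝ)).PosSemidef
        rw [sub_zero]
        exact (hpsd 1).2
    | succ j ih =>
      have hΨd : (S.Psi (S.ZX 0 (j + 1)).1 (S.ZX 0 (j + 1)).2
          - S.Psi (S.ZX 0 j).1 (S.ZX 0 j).2).PosSemidef := by
        rw [hPsiSub]
        exact (psd_smul hp1' ih.1).add (psd_smul hp0 ih.2)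
      constructor
      · show (S.Zstep (S.ZX 0 (j + 1)).1 - S.Zstep (S.ZX 0 j).1).PosSemidef
        rw [Zstep_eq_ric S (hpsd (j + 1)).1 hRc, Zstep_eq_ric S (hpsd j).1 hRc]
        exact ric_mono hRc (hpsd j).1 ih.1
      · show (S.Xstep (S.Psi (S.ZX 0 (j + 1)).1 (S.ZX 0 (j + 1)).2)
            - S.Xstep (S.Psi (S.ZX 0 j).1 (S.ZX 0 j).2)).PosSemidef
        rw [hXstep, hXstep]
        exact ric_mono hRL (hΨpsd j) hΨd
  refine ⟨fun j => ⟨U_posdef (hpsd j).1 hRc, U_posdef (hΨpsd j) hRL⟩, hpsd, fun N => ?_⟩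
  rw [hPsiSub]
  exact (psd_smul hp1' (hmono (N + 1)).1).add (psd_smul hp0 (hmono (N + 1)).2)

end NCS12
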